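/- arXiv:2401.01890 — 2 statements merged into one kernel-verified Lean document; each statement's English description precedes it below -/
import Mathlib

section
/- (Aguiar–Sottile formula) For any planar binary rooted tree t, the coproduct of the Möbius element satisfies Δ(M_t) = Σ_{z₁ ⋋ z₂ = t} M_{z₁} ⊗ M_{z₂}, where the sum runs over all factorizations of t (including the trivial ones with z₁ = 1 or z₂ = 1, setting M_1 = 1). -/
open Classical

/-- Planar binary rooted trees. `leaf` is the unique tree `|` with one leaf. -/
inductive PBT : Type
  | leaf : PBT
  | node : PBT → PBT → PBT
  deriving DecidableEq

/-- Number of leaves of a planar binary rooted tree. -/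
def leavesCount : PBT → ℕ
  | .leaf => 1
  | .node l r => leavesCount l + leavesCount r

/-- Graft the tree `w` onto the leftmost (first) leaf of `t`. -/
def graft1 : PBT → PBT → PBT
  | .leaf, w => w
  | .node l r, w => .node (graft1 l w) r

/-- The product `t ⋋ w := w ∘₁ (t ∨ |)`. -/
def lprod (t w : PBT) : PBT := graft1 w (.node t .leaf)

/-- A tree is `⋋`-irreducible if it is not a product of two (nonempty) trees. -/
def Irr (t : PBT) : Prop := ¬ ∃ u w : PBT, t = lprod u w

/-- One covering move of the Tamari order: a right rotation
`(a ∨ b) ∨ c ↦ a ∨ (b ∨ c)` applied at some internal node. -/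
inductive TStep : PBT → PBT → Prop
  | rot (a b c : PBT) : TStep (.node (.node a b) c) (.node a (.node b c))
  | left {a a' : PBT} (c : PBT) : TStep a a' → TStep (.node a c) (.node a' c)
  | right (a : PBT) {c c' : PBT} : TStep c c' → TStep (.node a c) (.node a c')

/-- The Tamari order on planar binary rooted trees: the reflexive transitive
closure of the rotation moves. -/
def tle : PBT → PBT → Prop := Relation.ReflTransGen TStep

/-- `∨` extended to trees-with-unit, the unit (`none`) acting as a unit. -/
def ovee : Option PBT → Option PBT → Option PBT
  | none, b => b
  | a, none => a
  | some t, some w => some (PBT.node t w)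

/-- The coproduct on trees (with values in the free module on pairs of
trees-with-unit): `Δ(t ∨ w) = Σ t₍₁₎ ⊗ (t₍₂₎ ∨ w) + Σ (t ∨ w₍₁₎) ⊗ w₍₂₎ − t ⊗ w`. -/
noncomputable def D0 : PBT → ((Option PBT × Option PBT) →₀ ℤ)
  | .leaf =>
      Finsupp.single (none, some PBT.leaf) 1 + Finsupp.single (some PBT.leaf, none) 1
  | .node t w =>
      ((D0 t).sum fun p a => a • Finsupp.single (p.1, ovee p.2 (some w)) 1) +
      ((D0 w).sum fun p a => a • Finsupp.single (ovee (some t) p.1, p.2) 1) -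
      Finsupp.single (some t, some w) 1

/-- The coproduct `Δ` on the vector space spanned by trees and the unit:
`Δ(1) = 1 ⊗ 1` and on trees it is given by `D0`. -/
noncomputable def D : Option PBT → ((Option PBT × Option PBT) →₀ ℤ)
  | none => Finsupp.single (none, none) 1
  | some t => D0 t

/-- `⋋` extended to trees-with-unit, the unit (`none`) acting as a unit. -/
def olprod : Option PBT → Option PBT → Option PBT
  | none, b => b
  | a, none => a
  | some t, some w => some (lprod t w)

/-- The linear extension of the coproduct `Δ`. -/
noncomputable def Dhat (f : Option PBT →₀ ℤ) : (Option PBT × Option PBT) →₀ ℤ :=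
  f.sum fun x a => a • D x

/-- The tensor product of two elements of the free module on trees-with-unit. -/
noncomputable def tens (f g : Option PBT →₀ ℤ) : (Option PBT × Option PBT) →₀ ℤ :=
  f.sum fun x a => g.sum fun y b => (a * b) • Finsupp.single (x, y) 1


-- basic lemmas
lemma leaves_pos (t : PBT) : 1 ≤ leavesCount t := by
  induction t with
  | leaf => simp [leavesCount]
  | node l r ih1 ih2 => simp [leavesCount]; omega

lemma TStep_leaves {s t : PBT} (h : TStep s t) : leavesCount s = leavesCount t := by
  induction h with
  | rot a b c => simp [leavesCount]; omega
  | left c h ih => simp [leavesCount, ih]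
  | right a h ih => simp [leavesCount, ih]

lemma tle_refl (t : PBT) : tle t t := Relation.ReflTransGen.refl

lemma tle_trans {a b c : PBT} (h1 : tle a b) (h2 : tle b c) : tle a c :=
  Relation.ReflTransGen.trans h1 h2

lemma tle_leaves {s t : PBT} (h : tle s t) : leavesCount s = leavesCount t := by
  induction h with
  | refl => rfl
  | tail h1 h2 ih => exact ih.trans (TStep_leaves h2)

def wt : PBT → ℕ
  | .leaf => 0
  | .node l r => wt l + wt r + leavesCount r

lemma TStep_wt {s t : PBT} (h : TStep s t) : wt s < wt t := by
  induction h with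
  | rot a b c => simp [wt, leavesCount]; have := leaves_pos c; omega
  | left c h ih => simp [wt]; omega
  | right a h ih => simp [wt, TStep_leaves h]; omega

lemma tle_wt {s t : PBT} (h : tle s t) : wt s ≤ wt t := by
  induction h with
  | refl => exact le_refl _
  | tail h1 h2 ih => exact ih.trans (TStep_wt h2).le

lemma tle_wt_lt {s t : PBT} (h : tle s t) (hne : s ≠ t) : wt s < wt t := by
  rcases Relation.ReflTransGen.cases_head h with h | ⟨c, hc, hcb⟩
  · exact absurd h hne
  · exact lt_of_lt_of_le (TStep_wt hc) (tle_wt hcb)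

lemma tle_antisymm {s t : PBT} (h1 : tle s t) (h2 : tle t s) : s = t := by
  by_contra hne
  have := tle_wt_lt h1 hne
  have := tle_wt h2
  omega

-- congruence lemmas
lemma tle_node_left {a a' : PBT} (c : PBT) (h : tle a a') : tle (.node a c) (.node a' c) := by
  induction h with
  | refl => exact tle_refl _
  | tail h1 h2 ih => exact ih.tail (TStep.left c h2)

lemma tle_node_right (a : PBT) {c c' : PBT} (h : tle c c') : tle (.node a c) (.node a c') := by
  induction h with
  | refl => exact tle_refl _
  | tail h1 h2 ih => exact ih.tail (TStep.right a h2)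

lemma TStep_graft1_arg {x x' : PBT} (v : PBT) (h : TStep x x') :
    TStep (graft1 v x) (graft1 v x') := by
  induction v with
  | leaf => exact h
  | node l r ih1 ih2 => exact TStep.left r ih1

lemma TStep_graft1_base {v v' : PBT} (x : PBT) (h : TStep v v') :
    TStep (graft1 v x) (graft1 v' x) := by
  induction h with
  | rot a b c => exact TStep.rot (graft1 a x) b c
  | left c h ih => exact TStep.left c ih
  | right a h ih => exact TStep.right (graft1 a x) h

lemma tle_graft1 {v v' x x' : PBT} (hv : tle v v') (hx : tle x x') :
    tle (graft1 v x) (graft1 v' x') := by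
  have h1 : tle (graft1 v x) (graft1 v' x) := by
    induction hv with
    | refl => exact tle_refl _
    | tail h1 h2 ih => exact ih.tail (TStep_graft1_base x h2)
  have h2 : tle (graft1 v' x) (graft1 v' x') := by
    induction hx with
    | refl => exact tle_refl _
    | tail h1 h2 ih => exact ih.tail (TStep_graft1_arg v' h2)
  exact tle_trans h1 h2

lemma lprod_mono {u u' w w' : PBT} (hu : tle u u') (hw : tle w w') :
    tle (lprod u w) (lprod u' w') :=
  tle_graft1 hw (tle_node_left _ hu)

lemma lprod_le_node (u w : PBT) : tle (lprod u w) (.node u w) := by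
  induction w with
  | leaf => exact tle_refl _
  | node l r ih1 ih2 =>
      show tle (.node (graft1 l (.node u .leaf)) r) _
      exact (tle_node_left r ih1).tail (TStep.rot u l r)

lemma graft1_aux (t u x : PBT) : ∀ v : PBT,
    tle (graft1 v (.node (.node t u) x)) (.node t (graft1 v (.node u x))) := by
  intro v
  induction v with
  | leaf => exact Relation.ReflTransGen.single (TStep.rot t u x)
  | node l r ih1 ih2 =>
      show tle (.node (graft1 l (.node (.node t u) x)) r) _
      exact (tle_node_left r ih1).tail (TStep.rot t (graft1 l (.node u x)) r)

lemma lprod_node_le (t u v : PBT) : tle (lprod (.node t u) v) (.node t (lprod u v)) :=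
  graft1_aux t u .leaf v

lemma leaves_graft1 (v x : PBT) : leavesCount (graft1 v x) = leavesCount v - 1 + leavesCount x := by
  induction v with
  | leaf => simp [graft1, leavesCount]
  | node l r ih1 ih2 => simp [graft1, leavesCount, ih1]; have := leaves_pos l; have := leaves_pos x; omega

lemma leaves_lprod (u w : PBT) : leavesCount (lprod u w) = leavesCount u + leavesCount w := by
  simp [lprod, leaves_graft1, leavesCount]; have := leaves_pos w; omega

/-- splitting of `t` at gap `i` -/
def sp : PBT → ℕ → Option PBT × Option PBT
  | .leaf, 0 => (none, some .leaf)
  | .leaf, _+1 => (some .leaf, none)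
  | .node t w, i =>
      if i < leavesCount t then ((sp t i).1, ovee (sp t i).2 (some w))
      else (ovee (some t) (sp w (i - leavesCount t)).1, (sp w (i - leavesCount t)).2)

def otle : Option PBT → Option PBT → Prop
  | none, none => True
  | some u, some v => tle u v
  | _, _ => False

lemma otle_refl (x : Option PBT) : otle x x := by cases x <;> simp [otle, tle_refl]

lemma otle_trans {x y z : Option PBT} (h1 : otle x y) (h2 : otle y z) : otle x z := by
  cases x <;> cases y <;> cases z <;> simp_all [otle]; exact tle_trans h1 h2

lemma sp_zero (t : PBT) : sp t 0 = (none, some t) := by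
  induction t with
  | leaf => rfl
  | node l r ih1 ih2 =>
      have h : 0 < leavesCount l := leaves_pos l
      simp [sp, h, ih1, ovee]

lemma sp_big (t : PBT) : ∀ i, leavesCount t ≤ i → sp t i = (some t, none) := by
  induction t with
  | leaf =>
      intro i hi
      rcases i with _|j
      · simp [leavesCount] at hi
      · rfl
  | node l r ih1 ih2 =>
      intro i hi
      simp [leavesCount] at hi
      have h1 : ¬ i < leavesCount l := by omega
      simp [sp, h1, ih2 (i - leavesCount l) (by omega), ovee]

lemma sp_fst_none {t : PBT} {i : ℕ} (h : (sp t i).1 = none) : i = 0 := by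
  by_contra hne
  induction t generalizing i with
  | leaf => rcases i with _|j; omega; simp [sp] at h
  | node l r ih1 ih2 =>
      by_cases hi : i < leavesCount l
      · simp [sp, hi] at h; exact ih1 h hne
      · simp [sp, hi, ovee] at h
        rcases h' : (sp r (i - leavesCount l)).1 with _|u <;> simp [h', ovee] at h

lemma sp_snd_some {t : PBT} {i : ℕ} (h : (sp t i).2 = none) : (sp t i).1 = some t := by
  induction t generalizing i with
  | leaf => rcases i with _|j; simp [sp] at h; rfl
  | node l r ih1 ih2 =>
      by_cases hi : i < leavesCount l
      · exfalso; simp [sp, hi] at h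
        rcases h' : (sp l i).2 with _|u <;> simp [h', ovee] at h
      · simp [sp, hi] at h ⊢
        rw [ih2 h, ovee]

/-- split leaf counts -/
lemma sp_fst_leaves : ∀ t : PBT, ∀ i, i ≤ leavesCount t → ∀ u, (sp t i).1 = some u →
    leavesCount u = i := by
  intro t
  induction t with
  | leaf =>
      intro i hi u h
      rcases i with _|j
      · rw [sp_zero] at h; simp at h
      · cases h
        simp [leavesCount] at hi ⊢
        omega
  | node l r ih1 ih2 =>
      intro i hi u h
      by_cases hil : i < leavesCount l
      · simp [sp, hil] at h
        exact ih1 i (le_of_lt hil) u h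
      · simp [sp, hil] at h
        rcases h' : (sp r (i - leavesCount l)).1 with _|v
        · rw [h'] at h; simp [ovee] at h
          have h0 := sp_fst_none h'
          subst h
          simp [leavesCount] at hi ⊢
          omega
        · rw [h'] at h; simp [ovee] at h
          have hv := ih2 (i - leavesCount l) (by simp [leavesCount] at hi; omega) v h'
          subst h
          simp [leavesCount]
          omega

lemma sp_node_lt {t w : PBT} {i : ℕ} (h : i < leavesCount t) :
    sp (.node t w) i = ((sp t i).1, ovee (sp t i).2 (some w)) := by
  simp [sp, h]

lemma sp_node_ge {t w : PBT} {i : ℕ} (h : ¬ i < leavesCount t) :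
    sp (.node t w) i =
      (ovee (some t) (sp w (i - leavesCount t)).1, (sp w (i - leavesCount t)).2) := by
  simp [sp, h]

lemma otle_ovee_right {x x' : Option PBT} {w w' : PBT} (h : otle x x') (hw : tle w w') :
    otle (ovee x (some w)) (ovee x' (some w')) := by
  cases x <;> cases x' <;> simp_all [otle, ovee]
  exact tle_trans (tle_node_left _ h) (tle_node_right _ hw)

lemma otle_ovee_left {a a' : PBT} {x x' : Option PBT} (ha : tle a a') (h : otle x x') :
    otle (ovee (some a) x) (ovee (some a') x') := by
  cases x <;> cases x' <;> simp_all [otle, ovee]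
  exact tle_trans (tle_node_left _ ha) (tle_node_right _ h)

lemma otle_assoc_r (x : Option PBT) (b c : PBT) :
    otle (ovee (ovee x (some b)) (some c)) (ovee x (some (.node b c))) := by
  cases x <;> simp [ovee, otle]
  · exact tle_refl _
  · exact Relation.ReflTransGen.single (TStep.rot _ b c)

lemma otle_assoc_l (a b : PBT) (x : Option PBT) :
    otle (ovee (some (PBT.node a b)) x) (ovee (some a) (ovee (some b) x)) := by
  cases x <;> simp [ovee, otle]
  · exact tle_refl _
  · exact Relation.ReflTransGen.single (TStep.rot a b _)

lemma sp_mono_step {s t : PBT} (h : TStep s t) :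
    ∀ i, otle (sp s i).1 (sp t i).1 ∧ otle (sp s i).2 (sp t i).2 := by
  induction h with
  | rot a b c =>
      intro i
      by_cases h1 : i < leavesCount a
      · have h2 : i < leavesCount (PBT.node a b) := by simp [leavesCount]; omega
        rw [sp_node_lt h2, sp_node_lt h1, sp_node_lt h1]
        exact ⟨otle_refl _, otle_assoc_r _ b c⟩
      · by_cases h2 : i < leavesCount a + leavesCount b
        · have h2' : i < leavesCount (PBT.node a b) := by simp [leavesCount]; omega
          have h3 : i - leavesCount a < leavesCount b := by omega
          rw [sp_node_lt h2', sp_node_ge h1, sp_node_ge h1, sp_node_lt h3]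
          exact ⟨otle_refl _, otle_refl _⟩
        · have h2' : ¬ i < leavesCount (PBT.node a b) := by simp [leavesCount]; omega
          have h3 : ¬ i - leavesCount a < leavesCount b := by omega
          have h4 : i - leavesCount a - leavesCount b = i - leavesCount (PBT.node a b) := by
            simp [leavesCount]; omega
          rw [sp_node_ge h2', sp_node_ge h1, sp_node_ge h3, h4]
          exact ⟨otle_assoc_l a b _, otle_refl _⟩
  | @left a a' c h ih =>
      intro i
      have hl : leavesCount a = leavesCount a' := TStep_leaves h
      by_cases h1 : i < leavesCount a
      · rw [sp_node_lt h1, sp_node_lt (hl ▸ h1)]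
        exact ⟨(ih i).1, otle_ovee_right (ih i).2 (tle_refl c)⟩
      · rw [sp_node_ge h1, sp_node_ge (hl ▸ h1), hl]
        exact ⟨otle_ovee_left (Relation.ReflTransGen.single h) (otle_refl _), otle_refl _⟩
  | @right a c c' h ih =>
      intro i
      by_cases h1 : i < leavesCount a
      · rw [sp_node_lt h1, sp_node_lt h1]
        exact ⟨otle_refl _, otle_ovee_right (otle_refl _) (Relation.ReflTransGen.single h)⟩
      · rw [sp_node_ge h1, sp_node_ge h1]
        exact ⟨otle_ovee_left (tle_refl a) (ih _).1, (ih _).2⟩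

lemma sp_mono {s t : PBT} (h : tle s t) (i : ℕ) :
    otle (sp s i).1 (sp t i).1 ∧ otle (sp s i).2 (sp t i).2 := by
  induction h with
  | refl => exact ⟨otle_refl _, otle_refl _⟩
  | tail h1 h2 ih =>
      exact ⟨otle_trans ih.1 (sp_mono_step h2 i).1, otle_trans ih.2 (sp_mono_step h2 i).2⟩

lemma sp_lprod (z₁ z₂ : PBT) : sp (lprod z₁ z₂) (leavesCount z₁) = (some z₁, some z₂) := by
  induction z₂ with
  | leaf =>
      show sp (.node z₁ .leaf) _ = _
      rw [sp_node_ge (by omega)]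
      simp [sp_zero, ovee]
  | node l r ih1 ih2 =>
      show sp (.node (lprod z₁ l) r) _ = _
      rw [sp_node_lt (by rw [leaves_lprod]; have := leaves_pos l; omega)]
      rw [ih1]
      simp [ovee]

lemma sp_olprod_le (t : PBT) : ∀ i, ∃ s, olprod (sp t i).1 (sp t i).2 = some s ∧ tle s t := by
  induction t with
  | leaf =>
      rintro (_|j)
      · exact ⟨.leaf, rfl, tle_refl _⟩
      · exact ⟨.leaf, rfl, tle_refl _⟩
  | node l r ih1 ih2 =>
      intro i
      by_cases h1 : i < leavesCount l
      · rw [sp_node_lt h1]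
        obtain ⟨s, hs, hst⟩ := ih1 i
        rcases e1 : (sp l i).1 with _|u <;> rcases e2 : (sp l i).2 with _|v <;>
          rw [e1, e2] at hs <;> simp [olprod, ovee] at hs ⊢
        · subst hs; exact tle_node_left r hst
        · subst hs; exact tle_trans (lprod_mono hst (tle_refl r)) (lprod_le_node l r)
        · subst hs
          exact tle_node_left r hst
      · rw [sp_node_ge h1]
        obtain ⟨s, hs, hst⟩ := ih2 (i - leavesCount l)
        rcases e1 : (sp r (i - leavesCount l)).1 with _|u <;>
          rcases e2 : (sp r (i - leavesCount l)).2 with _|v <;>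
          rw [e1, e2] at hs <;> simp [olprod, ovee] at hs ⊢
        · subst hs; exact tle_trans (lprod_mono (tle_refl l) hst) (lprod_le_node l r)
        · subst hs; exact tle_node_right l hst
        · subst hs
          exact tle_trans (lprod_node_le l u v) (tle_node_right l hst)

lemma otle_none_left {y : Option PBT} (h : otle none y) : y = none := by
  cases y <;> simp_all [otle]

lemma otle_some_left {u : PBT} {y : Option PBT} (h : otle (some u) y) :
    ∃ a, y = some a ∧ tle u a := by
  cases y with
  | none => simp [otle] at h
  | some a => exact ⟨a, rfl, h⟩

lemma factor_fwd {t : PBT} {z₁ z₂ : Option PBT} {s : PBT}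
    (he : olprod z₁ z₂ = some s) (hst : tle s t) :
    ∃ i, i ≤ leavesCount t ∧ otle z₁ (sp t i).1 ∧ otle z₂ (sp t i).2 := by
  cases z₁ with
  | none =>
      cases z₂ with
      | none => simp [olprod] at he
      | some v =>
          simp [olprod] at he; subst he
          exact ⟨0, Nat.zero_le _, by simp [sp_zero, otle], by simp [sp_zero, otle]; exact hst⟩
  | some u =>
      cases z₂ with
      | none =>
          simp [olprod] at he; subst he
          refine ⟨leavesCount t, le_refl _, ?_, ?_⟩
          · rw [sp_big t _ (le_refl _)]; exact hst
          · rw [sp_big t _ (le_refl _)]; trivial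
      | some v =>
          simp [olprod] at he; subst he
          have hl : leavesCount (lprod u v) = leavesCount t := tle_leaves hst
          rw [leaves_lprod] at hl
          refine ⟨leavesCount u, by have := leaves_pos v; omega, ?_, ?_⟩
          · have := (sp_mono hst (leavesCount u)).1
            rwa [sp_lprod] at this
          · have := (sp_mono hst (leavesCount u)).2
            rwa [sp_lprod] at this

lemma factor_bwd {t : PBT} {z₁ z₂ : Option PBT} {i : ℕ}
    (h1 : otle z₁ (sp t i).1) (h2 : otle z₂ (sp t i).2) :
    ∃ s, olprod z₁ z₂ = some s ∧ tle s t := by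
  obtain ⟨s₀, hs₀, hs₀t⟩ := sp_olprod_le t i
  cases z₁ with
  | none =>
      have e1 := otle_none_left h1
      have hi0 : i = 0 := sp_fst_none e1
      subst hi0
      rw [sp_zero] at h2
      cases z₂ with
      | none => simp [otle] at h2
      | some v => exact ⟨v, rfl, h2⟩
  | some u =>
      obtain ⟨a, ha, hua⟩ := otle_some_left h1
      cases z₂ with
      | none =>
          have e2 := otle_none_left h2
          have := sp_snd_some e2
          rw [this] at ha
          cases ha
          exact ⟨u, rfl, hua⟩
      | some v =>
          obtain ⟨b, hb, hvb⟩ := otle_some_left h2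
          rw [ha, hb] at hs₀
          simp [olprod] at hs₀
          subst hs₀
          exact ⟨lprod u v, rfl, tle_trans (lprod_mono hua hvb) hs₀t⟩

lemma factor_unique {t : PBT} {z₁ : Option PBT} {i i' : ℕ}
    (hi : i ≤ leavesCount t) (hi' : i' ≤ leavesCount t)
    (h : otle z₁ (sp t i).1) (h' : otle z₁ (sp t i').1) : i = i' := by
  cases z₁ with
  | none =>
      rw [sp_fst_none (otle_none_left h), sp_fst_none (otle_none_left h')]
  | some u =>
      obtain ⟨a, ha, hua⟩ := otle_some_left h
      obtain ⟨a', ha', hua'⟩ := otle_some_left h'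
      have e1 := sp_fst_leaves t i hi a ha
      have e2 := sp_fst_leaves t i' hi' a' ha'
      have := tle_leaves hua
      have := tle_leaves hua'
      omega

/-- leaf-count bounds for split components -/
lemma sp_leaves_le (t : PBT) (i : ℕ) :
    (∀ u, (sp t i).1 = some u → leavesCount u ≤ leavesCount t) ∧
    (∀ v, (sp t i).2 = some v → leavesCount v ≤ leavesCount t) := by
  obtain ⟨s, hs, hst⟩ := sp_olprod_le t i
  have hsl := tle_leaves hst
  constructor
  · intro u hu
    rw [hu] at hs
    rcases e2 : (sp t i).2 with _|v <;> rw [e2] at hs <;> simp [olprod] at hs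
    · subst hs; omega
    · have : leavesCount (lprod u v) = leavesCount s := by rw [hs]
      rw [leaves_lprod] at this
      have := leaves_pos v; omega
  · intro v hv
    rw [hv] at hs
    rcases e1 : (sp t i).1 with _|u <;> rw [e1] at hs <;> simp [olprod] at hs
    · subst hs; omega
    · have : leavesCount (lprod u v) = leavesCount s := by rw [hs]
      rw [leaves_lprod] at this
      have := leaves_pos u; omega

def treeList : ℕ → List PBT
  | 0 => []
  | 1 => [.leaf]
  | n+2 =>
      (List.range (n+1)).attach.flatMap fun i =>
        (treeList (i.1+1)).flatMap fun a => (treeList (n+1-i.1)).map fun b => PBT.node a b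
decreasing_by
  · have := i.2; simp [List.mem_range] at this; omega
  · have := i.2; simp [List.mem_range] at this; omega

lemma mem_treeList : ∀ n (t : PBT), t ∈ treeList n ↔ leavesCount t = n := by
  intro n
  induction n using Nat.strong_induction_on with
  | _ n ih =>
    match n with
    | 0 =>
        intro t
        simp [treeList]
        have := leaves_pos t; omega
    | 1 =>
        intro t
        cases t with
        | leaf => simp [treeList, leavesCount]
        | node a b =>
            simp [treeList, leavesCount]
            have := leaves_pos a; have := leaves_pos b; omega
    | n+2 =>
        intro t
        rw [treeList]
        simp only [List.mem_flatMap, List.mem_map, List.mem_attach, true_and, Subtype.exists,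
          List.mem_range]
        constructor
        · rintro ⟨i, hi, a, ha, b, hb, rfl⟩
          have ha' := (ih (i+1) (by omega) a).1 ha
          have hb' := (ih (n+1-i) (by omega) b).1 hb
          simp [leavesCount]; omega
        · intro ht
          cases t with
          | leaf => simp [leavesCount] at ht
          | node a b =>
              simp [leavesCount] at ht
              have ha := leaves_pos a; have hb := leaves_pos b
              refine ⟨leavesCount a - 1, by omega, a, ?_, b, ?_, rfl⟩
              · exact (ih (leavesCount a - 1 + 1) (by omega) a).2 (by omega)
              · exact (ih (n+1-(leavesCount a - 1)) (by omega) b).2 (by omega)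

noncomputable def treeFinset (n : ℕ) : Finset PBT := (treeList n).toFinset

lemma mem_treeFinset {n : ℕ} {t : PBT} : t ∈ treeFinset n ↔ leavesCount t = n := by
  simp [treeFinset, mem_treeList]

noncomputable def otreeFinset (n : ℕ) : Finset (Option PBT) :=
  insert none (((Finset.range (n+1)).biUnion treeFinset).image some)

lemma mem_otreeFinset_none {n : ℕ} : (none : Option PBT) ∈ otreeFinset n := by
  simp [otreeFinset]

lemma mem_otreeFinset_some {n : ℕ} {u : PBT} :
    (some u) ∈ otreeFinset n ↔ leavesCount u ≤ n := by
  simp [otreeFinset, mem_treeFinset]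

section Mob

variable (μ : PBT → PBT → ℤ)

lemma mobius_dual
    (hμrefl : ∀ t : PBT, μ t t = 1)
    (hμzero : ∀ w t : PBT, ¬ tle w t → μ w t = 0)
    (hμsum : ∀ w t : PBT, tle w t → w ≠ t →
      (∑ᶠ z : PBT, if tle w z ∧ tle z t then μ z t else 0) = 0)
    (n : ℕ) (w t : PBT) (hw : leavesCount w = n) (ht : leavesCount t = n) :
    (∑ z ∈ (treeFinset n).filter (fun z => tle z t), μ w z) = if w = t then 1 else 0 := by
  classical
  set Z : Matrix {z : PBT // z ∈ treeFinset n} {z : PBT // z ∈ treeFinset n} ℤ := Matrix.of (fun a b => if tle a.1 b.1 then 1 else 0) with hZ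
  set U : Matrix {z : PBT // z ∈ treeFinset n} {z : PBT // z ∈ treeFinset n} ℤ := Matrix.of (fun a b => μ a.1 b.1) with hU
  have h1 : Z * U = 1 := by
    ext a b
    rw [Matrix.mul_apply, Matrix.one_apply]
    by_cases hab : a = b
    · subst hab
      rw [Finset.sum_eq_single a]
      · simp [hZ, hU, tle_refl, hμrefl]
      · intro c _ hca
        by_cases h : tle a.1 c.1
        · have : ¬ tle c.1 a.1 := by
            intro h'
            exact hca (Subtype.ext (tle_antisymm h' h))
          simp [hZ, hU, h, hμzero _ _ this]
        · simp [hZ, h]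
      · intro h; exact absurd (Finset.mem_univ a) h
    · simp only [if_neg hab]
      by_cases hle : tle a.1 b.1
      · have hne : a.1 ≠ b.1 := fun h => hab (Subtype.ext h)
        have key := hμsum a.1 b.1 hle hne
        have hsupp : Function.support
            (fun z => if tle a.1 z ∧ tle z b.1 then μ z b.1 else 0) ⊆ ↑(treeFinset n) := by
          intro z hz
          simp only [Function.mem_support] at hz
          by_cases h : tle a.1 z ∧ tle z b.1
          · have : leavesCount z = n := by rw [← tle_leaves h.1]; exact mem_treeFinset.1 a.2
            simpa [mem_treeFinset] using this
          · simp [h] at hz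
        rw [finsum_eq_sum_of_support_subset _ hsupp] at key
        rw [← key, ← Finset.sum_coe_sort (treeFinset n)
          (fun z => if tle (↑a) z ∧ tle z ↑b then μ z ↑b else 0)]
        apply Finset.sum_congr rfl
        intro c _
        by_cases h : tle a.1 c.1
        · by_cases h2 : tle c.1 b.1
          · simp [hZ, hU, h, h2]
          · simp [hZ, hU, h, h2, hμzero _ _ h2]
        · simp [hZ, hU, h, fun hc : tle a.1 c.1 ∧ tle c.1 b.1 => h hc.1]
      · apply Finset.sum_eq_zero
        intro c _
        by_cases h : tle a.1 c.1
        · have : ¬ tle c.1 b.1 := fun h' => hle (tle_trans h h')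
          simp [hZ, hU, h, hμzero _ _ this]
        · simp [hZ, h]
  have h2 : U * Z = 1 := mul_eq_one_comm.mp h1
  have haw : w ∈ treeFinset n := mem_treeFinset.2 hw
  have hat : t ∈ treeFinset n := mem_treeFinset.2 ht
  have := congrArg (fun m => m ⟨w, haw⟩ ⟨t, hat⟩) h2
  simp only [Matrix.mul_apply, Matrix.one_apply] at this
  have lhs_eq : ∑ c : {z : PBT // z ∈ treeFinset n}, U ⟨w, haw⟩ c * Z c ⟨t, hat⟩
      = ∑ z ∈ (treeFinset n).filter (fun z => tle z t), μ w z := by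
    rw [Finset.sum_filter, ← Finset.sum_coe_sort (treeFinset n)
      (fun z => if tle z t then μ w z else 0)]
    apply Finset.sum_congr rfl
    intro c _
    by_cases h : tle c.1 t <;> simp [hZ, hU, h]
  rw [lhs_eq] at this
  rw [this]
  by_cases h : w = t
  · subst h; simp
  · simp [h, fun hh : (⟨w, haw⟩ : {z : PBT // z ∈ treeFinset n}) = ⟨t, hat⟩ => h (congrArg Subtype.val hh)]

end Mob

section Lin

variable {β : Type*} {N : Type*} [AddCommGroup N]

noncomputable def lin (h : β → N) (f : β →₀ ℤ) : N := f.sum fun p a => a • h p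

lemma lin_zero (h : β → N) : lin h 0 = 0 := by simp [lin]

lemma lin_add (h : β → N) (f g : β →₀ ℤ) : lin h (f + g) = lin h f + lin h g :=
  Finsupp.sum_add_index' (fun p => zero_smul _ _) (fun p a b => add_smul a b (h p))

lemma lin_single (h : β → N) (x : β) (c : ℤ) : lin h (Finsupp.single x c) = c • h x :=
  Finsupp.sum_single_index (zero_smul _ _)

lemma lin_finset_sum {α : Type*} (h : β → N) (s : Finset α) (f : α → (β →₀ ℤ)) :
    lin h (∑ i ∈ s, f i) = ∑ i ∈ s, lin h (f i) := by
  classical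
  induction s using Finset.induction_on with
  | empty => simp [lin_zero]
  | insert _ _ hne ih => rw [Finset.sum_insert hne, Finset.sum_insert hne, lin_add, ih]

lemma lin_sum_fun {α : Type*} (s : Finset α) (A : β → α → N) (f : β →₀ ℤ) :
    lin (fun x => ∑ j ∈ s, A x j) f = ∑ j ∈ s, lin (fun x => A x j) f := by
  rw [lin, Finsupp.sum]
  have h1 : ∀ x ∈ f.support, f x • (∑ j ∈ s, A x j) = ∑ j ∈ s, f x • A x j :=
    fun x _ => Finset.smul_sum
  rw [Finset.sum_congr rfl h1, Finset.sum_comm]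
  rfl

end Lin

lemma tens_eq_lin (f g : Option PBT →₀ ℤ) :
    tens f g = lin (fun x => lin (fun y => Finsupp.single (x, y) (1:ℤ)) g) f := by
  unfold tens lin
  apply Finsupp.sum_congr
  intro x _
  rw [Finsupp.smul_sum]
  apply Finsupp.sum_congr
  intro y _
  rw [smul_smul]

lemma tens_single_single (x y : Option PBT) :
    tens (Finsupp.single x 1) (Finsupp.single y 1) = Finsupp.single (x, y) 1 := by
  rw [tens_eq_lin, lin_single, one_smul, lin_single, one_smul]

lemma tens_finset_sum_left {α : Type*} (s : Finset α) (f : α → (Option PBT →₀ ℤ))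
    (g : Option PBT →₀ ℤ) : tens (∑ i ∈ s, f i) g = ∑ i ∈ s, tens (f i) g := by
  rw [tens_eq_lin, lin_finset_sum]
  exact Finset.sum_congr rfl fun i _ => (tens_eq_lin (f i) g).symm

lemma tens_finset_sum_right {α : Type*} (s : Finset α) (f : Option PBT →₀ ℤ)
    (g : α → (Option PBT →₀ ℤ)) : tens f (∑ i ∈ s, g i) = ∑ i ∈ s, tens f (g i) := by
  rw [tens_eq_lin]
  have h1 : (fun x : Option PBT => lin (fun y => Finsupp.single (x, y) (1:ℤ)) (∑ i ∈ s, g i))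
      = fun x : Option PBT => ∑ i ∈ s, lin (fun y => Finsupp.single (x, y) (1:ℤ)) (g i) := by
    funext x; rw [lin_finset_sum]
  rw [h1, lin_sum_fun]
  exact Finset.sum_congr rfl fun i _ => (tens_eq_lin f (g i)).symm

lemma Dhat_eq_lin (f : Option PBT →₀ ℤ) : Dhat f = lin D f := rfl

lemma Dhat_finset_sum {α : Type*} (s : Finset α) (f : α → (Option PBT →₀ ℤ)) :
    Dhat (∑ i ∈ s, f i) = ∑ i ∈ s, Dhat (f i) := by
  simp only [Dhat_eq_lin]; exact lin_finset_sum _ _ _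

/-- The coproduct in terms of splittings. -/
lemma D0_split (t : PBT) :
    D0 t = ∑ i ∈ Finset.range (leavesCount t + 1), Finsupp.single (sp t i) 1 := by
  induction t with
  | leaf =>
      show _ = ∑ i ∈ Finset.range 2, _
      rw [Finset.sum_range_succ, Finset.sum_range_one]
      rfl
  | node l r ih1 ih2 =>
      show (lin (fun p => Finsupp.single (p.1, ovee p.2 (some r)) (1:ℤ)) (D0 l)) +
          (lin (fun p => Finsupp.single (ovee (some l) p.1, p.2) (1:ℤ)) (D0 r)) -
          Finsupp.single (some l, some r) 1 = _
      rw [ih1, ih2, lin_finset_sum, lin_finset_sum]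
      simp only [lin_single, one_smul]
      have e1 : ∀ i ∈ Finset.range (leavesCount l), (Finsupp.single
            ((sp l i).1, ovee (sp l i).2 (some r)) (1:ℤ)) = Finsupp.single (sp (PBT.node l r) i) 1 := by
        intro i hi
        rw [sp_node_lt (Finset.mem_range.1 hi)]
      have e2 : ∀ j ∈ Finset.range (leavesCount r + 1), (Finsupp.single
            (ovee (some l) (sp r j).1, (sp r j).2) (1:ℤ))
          = Finsupp.single (sp (PBT.node l r) (leavesCount l + j)) 1 := by
        intro j hj
        rw [sp_node_ge (by omega)]
        congr 2 <;> rw [Nat.add_sub_cancel_left]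
      rw [Finset.sum_range_succ, Finset.sum_congr rfl e1]
      rw [sp_big l _ (le_refl _)]
      rw [Finset.sum_congr rfl e2]
      have e3 : Finsupp.single ((some l : Option PBT), ovee none (some r)) (1:ℤ)
          = Finsupp.single (some l, some r) 1 := rfl
      rw [e3]
      have hsplit : ∑ i ∈ Finset.range (leavesCount (PBT.node l r) + 1),
            Finsupp.single (sp (PBT.node l r) i) (1:ℤ)
          = ∑ i ∈ Finset.range (leavesCount l), Finsupp.single (sp (PBT.node l r) i) 1
            + ∑ j ∈ Finset.range (leavesCount r + 1),
                Finsupp.single (sp (PBT.node l r) (leavesCount l + j)) 1 := by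
        have : leavesCount (PBT.node l r) + 1 = leavesCount l + (leavesCount r + 1) := by
          simp only [leavesCount]; omega
        rw [this, Finset.sum_range_add]
      rw [hsplit]
      abel

section MSum

variable (μ : PBT → PBT → ℤ) (M : PBT → (PBT →₀ ℤ))
variable (hM : ∀ t w : PBT, M t w = μ w t)
variable (hμrefl : ∀ t : PBT, μ t t = 1)
variable (hμzero : ∀ w t : PBT, ¬ tle w t → μ w t = 0)
variable (hμsum : ∀ w t : PBT, tle w t → w ≠ t →
      (∑ᶠ z : PBT, if tle w z ∧ tle z t then μ z t else 0) = 0)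

include hM hμrefl hμzero hμsum in
lemma Msum (a : PBT) :
    ∑ t' ∈ (treeFinset (leavesCount a)).filter (fun z => tle z a), M t'
      = Finsupp.single a 1 := by
  classical
  apply Finsupp.ext
  intro x
  rw [Finsupp.finset_sum_apply]
  simp only [hM]
  by_cases hx : leavesCount x = leavesCount a
  · rw [mobius_dual μ hμrefl hμzero hμsum (leavesCount a) x a hx rfl, Finsupp.single_apply]
    by_cases hxa : x = a
    · simp [hxa]
    · rw [if_neg hxa, if_neg (fun h : a = x => hxa h.symm)]
  · have h0 : ∀ t' ∈ (treeFinset (leavesCount a)).filter (fun z => tle z a), μ x t' = 0 := by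
      intro t' ht'
      simp only [Finset.mem_filter, mem_treeFinset] at ht'
      apply hμzero
      intro hc
      exact hx (by rw [tle_leaves hc, ht'.1])
    rw [Finset.sum_eq_zero h0, Finsupp.single_apply]
    have : a ≠ x := fun h => hx (by rw [h])
    simp [this]

include hM hμrefl hμzero hμsum in
lemma fibsum (n : ℕ) (y : Option PBT) (hy : ∀ u, y = some u → leavesCount u ≤ n) :
    ∑ z ∈ (otreeFinset n).filter (fun z => otle z y),
      (Option.elim z (Finsupp.single none (1:ℤ)) (fun u => Finsupp.mapDomain some (M u)))
      = Finsupp.single y 1 := by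
  classical
  cases y with
  | none =>
      have hfil : (otreeFinset n).filter (fun z => otle z none) = {none} := by
        apply Finset.ext
        intro z
        cases z with
        | none => rw [Finset.mem_filter]; simp [mem_otreeFinset_none, otle]
        | some u => rw [Finset.mem_filter]; simp [otle]
      rw [hfil, Finset.sum_singleton]
      rfl
  | some a =>
      have hfil : (otreeFinset n).filter (fun z => otle z (some a))
          = ((treeFinset (leavesCount a)).filter (fun z => tle z a)).image some := by
        apply Finset.ext
        intro z
        cases z with
        | none => rw [Finset.mem_filter]; simp [otle]
        | some u =>
            rw [Finset.mem_filter]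
            simp only [Finset.mem_filter, Finset.mem_image, mem_otreeFinset_some, otle,
              mem_treeFinset]
            constructor
            · rintro ⟨h1, h2⟩
              exact ⟨u, ⟨tle_leaves h2, h2⟩, rfl⟩
            · rintro ⟨v, ⟨hv1, hv2⟩, he⟩
              cases he
              exact ⟨by rw [hv1]; exact hy a rfl, hv2⟩
      rw [hfil, Finset.sum_image (by intro x _ y _ h; exact Option.some_injective _ h)]
      simp only [Option.elim]
      rw [← Finsupp.mapDomain_finset_sum]
      rw [Msum μ M hM hμrefl hμzero hμsum a, Finsupp.mapDomain_single]

end MSum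

noncomputable def MoF (M : PBT → (PBT →₀ ℤ)) : Option PBT → (Option PBT →₀ ℤ) :=
  fun z => Option.elim z (Finsupp.single none 1) (fun u => Finsupp.mapDomain some (M u))

noncomputable def TT (M : PBT → (PBT →₀ ℤ)) (p : Option PBT × Option PBT) :
    (Option PBT × Option PBT) →₀ ℤ :=
  tens (MoF M p.1) (MoF M p.2)

noncomputable def RR (M : PBT → (PBT →₀ ℤ)) (t : PBT) : (Option PBT × Option PBT) →₀ ℤ :=
  ∑ᶠ p : Option PBT × Option PBT, if olprod p.1 p.2 = some t then TT M p else 0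

lemma RR_eq_finset (M : PBT → (PBT →₀ ℤ)) (n : ℕ) (s : PBT) (hn : leavesCount s = n) :
    RR M s = ∑ p ∈ (otreeFinset n) ×ˢ (otreeFinset n),
      if olprod p.1 p.2 = some s then TT M p else 0 := by
  classical
  apply finsum_eq_sum_of_support_subset
  intro p hp
  simp only [Function.mem_support] at hp
  by_cases hc : olprod p.1 p.2 = some s
  · simp only [Finset.coe_product, Set.mem_prod, Finset.mem_coe]
    rcases p with ⟨z₁, z₂⟩
    cases z₁ with
    | none =>
        cases z₂ with
        | none => simp [olprod] at hc
        | some v =>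
            simp only [olprod] at hc
            cases hc
            exact ⟨mem_otreeFinset_none, mem_otreeFinset_some.2 (by omega)⟩
    | some u =>
        cases z₂ with
        | none =>
            simp only [olprod] at hc
            cases hc
            exact ⟨mem_otreeFinset_some.2 (by omega), mem_otreeFinset_none⟩
        | some v =>
            simp only [olprod, Option.some_inj] at hc
            have : leavesCount (lprod u v) = n := by rw [hc, hn]
            rw [leaves_lprod] at this
            have hu := leaves_pos u; have hv := leaves_pos v
            exact ⟨mem_otreeFinset_some.2 (by omega), mem_otreeFinset_some.2 (by omega)⟩
  · simp [hc] at hp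

section Main

variable (μ : PBT → PBT → ℤ) (M : PBT → (PBT →₀ ℤ))
variable (hM : ∀ t w : PBT, M t w = μ w t)
variable (hμrefl : ∀ t : PBT, μ t t = 1)
variable (hμzero : ∀ w t : PBT, ¬ tle w t → μ w t = 0)
variable (hμsum : ∀ w t : PBT, tle w t → w ≠ t →
      (∑ᶠ z : PBT, if tle w z ∧ tle z t then μ z t else 0) = 0)

include hM hμrefl hμzero hμsum in
lemma fibsum' (n : ℕ) (y : Option PBT) (hy : ∀ u, y = some u → leavesCount u ≤ n) :
    ∑ z ∈ (otreeFinset n).filter (fun z => otle z y), MoF M z = Finsupp.single y 1 :=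
  fibsum μ M hM hμrefl hμzero hμsum n y hy

include hM hμrefl hμzero hμsum in
lemma RRsum (s : PBT) :
    ∑ z ∈ (treeFinset (leavesCount s)).filter (fun z => tle z s), RR M z = D0 s := by
  classical
  set n := leavesCount s with hn
  have hconv : ∀ z ∈ (treeFinset n).filter (fun z => tle z s),
      RR M z = ∑ p ∈ (otreeFinset n) ×ˢ (otreeFinset n),
        if olprod p.1 p.2 = some z then TT M p else 0 := by
    intro z hz
    simp only [Finset.mem_filter, mem_treeFinset] at hz
    exact RR_eq_finset M n z hz.1
  rw [Finset.sum_congr rfl hconv, Finset.sum_comm]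
  have step1 : ∀ p ∈ (otreeFinset n) ×ˢ (otreeFinset n),
      (∑ z ∈ (treeFinset n).filter (fun z => tle z s),
        if olprod p.1 p.2 = some z then TT M p else 0)
      = ∑ i ∈ Finset.range (n+1),
          if otle p.1 (sp s i).1 ∧ otle p.2 (sp s i).2 then TT M p else 0 := by
    intro p _
    have hhalf : (∑ z ∈ (treeFinset n).filter (fun z => tle z s),
        if olprod p.1 p.2 = some z then TT M p else 0)
        = if ∃ s₀, olprod p.1 p.2 = some s₀ ∧ tle s₀ s then TT M p else 0 := by
      rcases e : olprod p.1 p.2 with _|s₀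
      · rw [Finset.sum_eq_zero (fun z _ => by simp), if_neg]
        rintro ⟨s₀, h1, h2⟩
        cases h1
      · have hz : ∀ z ∈ (treeFinset n).filter (fun z => tle z s),
            (if (some s₀ : Option PBT) = some z then TT M p else 0)
            = if z = s₀ then TT M p else 0 := by
          intro z _
          by_cases h : z = s₀
          · simp [h]
          · rw [if_neg (fun hh => h (Option.some_inj.mp hh).symm), if_neg h]
        rw [Finset.sum_congr rfl hz, Finset.sum_ite_eq' _ s₀ (fun _ => TT M p)]
        by_cases hmem : tle s₀ s
        · rw [if_pos, if_pos ⟨s₀, rfl, hmem⟩]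
          simp only [Finset.mem_filter, mem_treeFinset]
          exact ⟨by rw [tle_leaves hmem], hmem⟩
        · rw [if_neg, if_neg]
          · rintro ⟨s₁, h1, h2⟩
            rw [Option.some_inj] at h1
            exact hmem (h1 ▸ h2)
          · simp only [Finset.mem_filter, mem_treeFinset]
            rintro ⟨-, h2⟩
            exact hmem h2
    rw [hhalf]
    by_cases hex : ∃ s₀, olprod p.1 p.2 = some s₀ ∧ tle s₀ s
    · obtain ⟨s₀, he, hle⟩ := hex
      obtain ⟨i₀, hi₀n, h1, h2⟩ := factor_fwd he hle
      rw [if_pos ⟨s₀, he, hle⟩, Finset.sum_eq_single i₀]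
      · rw [if_pos ⟨h1, h2⟩]
      · intro j hj hji
        rw [if_neg]
        rintro ⟨g1, g2⟩
        exact hji (factor_unique (by simpa using Nat.lt_succ_iff.1 (Finset.mem_range.1 hj))
          (by simpa using hi₀n) g1 h1)
      · intro hcon
        exact absurd (Finset.mem_range.2 (by omega)) hcon
    · rw [if_neg hex, Finset.sum_eq_zero]
      intro i _
      rw [if_neg]
      rintro ⟨g1, g2⟩
      exact hex (factor_bwd g1 g2)
  rw [Finset.sum_congr rfl step1, Finset.sum_comm]
  have step2 : ∀ i ∈ Finset.range (n+1),
      (∑ p ∈ (otreeFinset n) ×ˢ (otreeFinset n),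
        if otle p.1 (sp s i).1 ∧ otle p.2 (sp s i).2 then TT M p else 0)
      = Finsupp.single (sp s i) 1 := by
    intro i _
    rw [← Finset.sum_filter,
      Finset.filter_product (fun y => otle y (sp s i).1) (fun y => otle y (sp s i).2),
      Finset.sum_product]
    have hb1 : ∀ u, (sp s i).1 = some u → leavesCount u ≤ n := by
      intro u hu
      rw [hn]
      exact (sp_leaves_le s i).1 u hu
    have hb2 : ∀ u, (sp s i).2 = some u → leavesCount u ≤ n := by
      intro u hu
      rw [hn]
      exact (sp_leaves_le s i).2 u hu
    have inner : ∀ x ∈ (otreeFinset n).filter (fun y => otle y (sp s i).1),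
        (∑ y ∈ (otreeFinset n).filter (fun y => otle y (sp s i).2), TT M (x, y))
        = tens (MoF M x) (Finsupp.single (sp s i).2 1) := by
      intro x _
      rw [show (fun y => TT M (x, y)) = fun y => tens (MoF M x) (MoF M y) from rfl]
      rw [← tens_finset_sum_right, fibsum' μ M hM hμrefl hμzero hμsum n (sp s i).2 hb2]
    rw [Finset.sum_congr rfl inner, ← tens_finset_sum_left,
      fibsum' μ M hM hμrefl hμzero hμsum n (sp s i).1 hb1, tens_single_single]
  rw [Finset.sum_congr rfl step2, hn, ← D0_split]

include hM hμrefl hμzero hμsum in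
lemma mainlem : ∀ N : ℕ, ∀ s : PBT, wt s < N →
    Dhat (Finsupp.mapDomain some (M s)) = RR M s := by
  intro N
  induction N with
  | zero => intro s hs; exact absurd hs (Nat.not_lt_zero _)
  | succ N ih =>
      intro s hs
      have hLs : ∑ z ∈ (treeFinset (leavesCount s)).filter (fun z => tle z s),
          Dhat (Finsupp.mapDomain some (M z)) = D0 s := by
        rw [← Dhat_finset_sum, ← Finsupp.mapDomain_finset_sum,
          Msum μ M hM hμrefl hμzero hμsum s, Finsupp.mapDomain_single, Dhat_eq_lin,
          lin_single, one_smul]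
        rfl
      have hRs := RRsum μ M hM hμrefl hμzero hμsum s
      set F := (treeFinset (leavesCount s)).filter (fun z => tle z s) with hF
      have hmem : s ∈ F := by
        simp [hF, Finset.mem_filter, mem_treeFinset, tle_refl]
      have herase : ∀ z ∈ F.erase s, Dhat (Finsupp.mapDomain some (M z)) = RR M z := by
        intro z hz
        have hz' := Finset.mem_of_mem_erase hz
        have hne := Finset.ne_of_mem_erase hz
        simp only [hF, Finset.mem_filter] at hz'
        exact ih z (by have := tle_wt_lt hz'.2 hne; omega)
      have e1 := Finset.add_sum_erase F (fun z => Dhat (Finsupp.mapDomain some (M z))) hmem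
      have e2 := Finset.add_sum_erase F (fun z => RR M z) hmem
      rw [Finset.sum_congr rfl herase] at e1
      have e3 := e1.trans (hLs.trans hRs.symm)
      rw [← e2] at e3
      exact add_right_cancel e3

end Main


/-- (Aguiar–Sottile formula) `Δ(M_t) = Σ_{z₁ ⋋ z₂ = t} M_{z₁} ⊗ M_{z₂}`, the
sum running over all factorizations of `t`, including the trivial ones with
`z₁ = 1` or `z₂ = 1` (setting `M_1 = 1`). -/
theorem stmt16
    (μ : PBT → PBT → ℤ) (M : PBT → (PBT →₀ ℤ))
    (hM : ∀ t w : PBT, M t w = μ w t)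
    (hμrefl : ∀ t : PBT, μ t t = 1)
    (hμzero : ∀ w t : PBT, ¬ tle w t → μ w t = 0)
    (hμsum : ∀ w t : PBT, tle w t → w ≠ t →
      (∑ᶠ z : PBT, if tle w z ∧ tle z t then μ z t else 0) = 0)
    (t : PBT) :
    Dhat (Finsupp.mapDomain some (M t)) =
      ∑ᶠ p : Option PBT × Option PBT,
        if olprod p.1 p.2 = some t then
          tens (Option.elim p.1 (Finsupp.single none 1)
                  (fun z => Finsupp.mapDomain some (M z)))
               (Option.elim p.2 (Finsupp.single none 1)
                  (fun z => Finsupp.mapDomain some (M z)))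
        else 0 := by
  show Dhat (Finsupp.mapDomain some (M t)) = RR M t
  exact mainlem μ M hM hμrefl hμzero hμsum (wt t + 1) t (Nat.lt_succ_self _)
end

section
/- The coproduct Δ_R on the vector space spanned by all reflexive integer relations, defined by Δ_R(R) = Σ_{i=0}^{n} R|_{[i]} ⊗ R|_{{i+1,…,n}} for R of size n, is coassociative, and for each of the associative products ★ ∈ {⊔, ↑, ↓, ↕} the pair (★, Δ_R) satisfies the unital infinitesimal relation: Δ_R(P ★ Q) = Σ P₍₁₎ ⊗ (P₍₂₎ ★ Q) + Σ (P ★ Q₍₁₎) ⊗ Q₍₂₎ − P ⊗ Q. -/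
/-- An integer relation: a reflexive binary relation on `{0, 1, …, n−1}`
(representing `[n] = {1,…,n}`). -/
structure IntRel where
  n : ℕ
  rel : ℕ → ℕ → Prop
  dom : ∀ i j, rel i j → i < n ∧ j < n
  refl : ∀ i, i < n → rel i i

/-- The four products `⊔, ↑, ↓, ↕` on integer relations: `glue up down R Q`
places `R` and `Q` side by side; if `up = true` it also adds all pairs `(i, j)`
with `i` in the `R`-block and `j` in the `Q`-block, and if `down = true` all
pairs `(j, i)` with `i` in the `R`-block and `j` in the `Q`-block.
Thus `⊔ = glue false false`, `↑ = glue true false`, `↓ = glue false true`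
and `↕ = glue true true`. -/
def glue (up down : Bool) (R Q : IntRel) : IntRel where
  n := R.n + Q.n
  rel i j := R.rel i j ∨ (R.n ≤ i ∧ R.n ≤ j ∧ Q.rel (i - R.n) (j - R.n)) ∨
    (up = true ∧ i < R.n ∧ R.n ≤ j ∧ j < R.n + Q.n) ∨
    (down = true ∧ j < R.n ∧ R.n ≤ i ∧ i < R.n + Q.n)
  dom := by
    intro i j h
    rcases h with h | ⟨hi, hj, h⟩ | ⟨_, h1, h2, h3⟩ | ⟨_, h1, h2, h3⟩
    · have := R.dom i j h; omega
    · have := Q.dom _ _ h; omega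
    · omega
    · omega
  refl := by
    intro i hi
    by_cases h : i < R.n
    · exact Or.inl (R.refl i h)
    · exact Or.inr (Or.inl ⟨by omega, by omega, Q.refl _ (by omega)⟩)

/-- The restriction of `R` to the initial segment `{0,…,k−1}`. -/
def restLe (R : IntRel) (k : ℕ) : IntRel where
  n := min k R.n
  rel i j := i < k ∧ j < k ∧ R.rel i j
  dom := by
    rintro i j ⟨h1, h2, h⟩
    have := R.dom i j h
    omega
  refl := by
    intro i hi
    exact ⟨by omega, by omega, R.refl i (by omega)⟩

/-- The restriction of `R` to `{k, k+1, …, n−1}`, renumbered from `0`. -/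
def restGe (R : IntRel) (k : ℕ) : IntRel where
  n := R.n - k
  rel i j := R.rel (i + k) (j + k)
  dom := by
    intro i j h
    have := R.dom _ _ h
    omega
  refl := by
    intro i hi
    exact R.refl _ (by omega)

/-- The coproduct `Δ_R(R) = Σ_{i=0}^{n} R|_{[i]} ⊗ R|_{{i+1,…,n}}`, valued in
the free module on pairs of integer relations. -/
noncomputable def coR (R : IntRel) : (IntRel × IntRel) →₀ ℤ :=
  ∑ i ∈ Finset.range (R.n + 1), Finsupp.single (restLe R i, restGe R i) 1

/-! ### Auxiliary lemmas -/

theorem IntRel.ext' {R S : IntRel} (hn : R.n = S.n)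
    (hrel : ∀ i j, R.rel i j ↔ S.rel i j) : R = S := by
  obtain ⟨n, rel, d, r⟩ := R
  obtain ⟨n', rel', d', r'⟩ := S
  simp only at hn
  subst hn
  have : rel = rel' := funext fun i => funext fun j => propext (hrel i j)
  subst this
  rfl

theorem coR_sum {γ : Type*} (R : IntRel) (g : IntRel × IntRel → (γ →₀ ℤ)) :
    ((coR R).sum fun p a => a • g p) =
      ∑ i ∈ Finset.range (R.n + 1), g (restLe R i, restGe R i) := by
  rw [coR, ← Finsupp.sum_finset_sum_index
    (g := fun i => Finsupp.single ((restLe R i, restGe R i) : IntRel × IntRel) (1 : ℤ))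
    (h := fun p a => a • g p) (fun a => by simp) (fun a b₁ b₂ => by simp [add_smul])]
  refine Finset.sum_congr rfl fun i _ => ?_
  rw [Finsupp.sum_single_index (by simp)]
  simp

theorem restLe_restLe (R : IntRel) {i j : ℕ} (hj : j ≤ i) :
    restLe (restLe R i) j = restLe R j := by
  refine IntRel.ext' (by simp only [restLe]; omega) fun a b => ?_
  simp only [restLe]
  constructor
  · rintro ⟨h1, h2, _, _, h⟩; exact ⟨h1, h2, h⟩
  · rintro ⟨h1, h2, h⟩; exact ⟨h1, h2, by omega, by omega, h⟩

theorem restGe_restLe (R : IntRel) (i j : ℕ) :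
    restGe (restLe R i) j = restLe (restGe R j) (i - j) := by
  refine IntRel.ext' (by simp only [restLe, restGe]; omega) fun a b => ?_
  simp only [restLe, restGe]
  constructor
  · rintro ⟨h1, h2, h⟩; exact ⟨by omega, by omega, h⟩
  · rintro ⟨h1, h2, h⟩; exact ⟨by omega, by omega, h⟩

theorem restGe_restGe (R : IntRel) (i j : ℕ) :
    restGe (restGe R i) j = restGe R (i + j) := by
  refine IntRel.ext' (by simp only [restGe]; omega) fun a b => ?_
  simp only [restGe]
  rw [show a + j + i = a + (i + j) by omega, show b + j + i = b + (i + j) by omega]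

theorem restLe_self (R : IntRel) : restLe R R.n = R := by
  refine IntRel.ext' (by simp only [restLe]; omega) fun a b => ?_
  simp only [restLe]
  constructor
  · rintro ⟨_, _, h⟩; exact h
  · intro h; have := R.dom a b h; exact ⟨by omega, by omega, h⟩

theorem restGe_zero (R : IntRel) : restGe R 0 = R := by
  refine IntRel.ext' (by simp only [restGe]; omega) fun a b => ?_
  simp only [restGe, Nat.add_zero]

theorem glue_restLe_zero (up down : Bool) (P Q : IntRel) :
    glue up down P (restLe Q 0) = P := by
  refine IntRel.ext' (by simp only [glue, restLe]; omega) fun a b => ?_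
  simp only [glue, restLe]
  constructor
  · rintro (h | ⟨h1, h2, _, h, _⟩ | ⟨_, h1, h2, h3⟩ | ⟨_, h1, h2, h3⟩)
    · exact h
    · omega
    · omega
    · omega
  · exact fun h => Or.inl h

-- claims about restrictions of glue
theorem restLe_glue_left (up down : Bool) (P Q : IntRel) {k : ℕ} (hk : k ≤ P.n) :
    restLe (glue up down P Q) k = restLe P k := by
  refine IntRel.ext' (by simp only [glue, restLe]; omega) fun a b => ?_
  simp only [restLe, glue]
  constructor
  · rintro ⟨h1, h2, h | ⟨g1, g2, g3⟩ | ⟨_, g1, g2, g3⟩ | ⟨_, g1, g2, g3⟩⟩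
    · exact ⟨h1, h2, h⟩
    · omega
    · omega
    · omega
  · rintro ⟨h1, h2, h⟩; exact ⟨h1, h2, Or.inl h⟩

theorem restGe_glue_left (up down : Bool) (P Q : IntRel) {k : ℕ} (hk : k ≤ P.n) :
    restGe (glue up down P Q) k = glue up down (restGe P k) Q := by
  refine IntRel.ext' (by simp only [glue, restGe]; omega) fun a b => ?_
  simp only [restGe, glue]
  rw [show a + k - P.n = a - (P.n - k) by omega, show b + k - P.n = b - (P.n - k) by omega]
  constructor
  · rintro (h | ⟨g1, g2, g3⟩ | ⟨hu, g1, g2, g3⟩ | ⟨hd, g1, g2, g3⟩)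
    · exact Or.inl h
    · exact Or.inr (Or.inl ⟨by omega, by omega, g3⟩)
    · exact Or.inr (Or.inr (Or.inl ⟨hu, by omega, by omega, by omega⟩))
    · exact Or.inr (Or.inr (Or.inr ⟨hd, by omega, by omega, by omega⟩))
  · rintro (h | ⟨g1, g2, g3⟩ | ⟨hu, g1, g2, g3⟩ | ⟨hd, g1, g2, g3⟩)
    · exact Or.inl h
    · exact Or.inr (Or.inl ⟨by omega, by omega, g3⟩)
    · exact Or.inr (Or.inr (Or.inl ⟨hu, by omega, by omega, by omega⟩))
    · exact Or.inr (Or.inr (Or.inr ⟨hd, by omega, by omega, by omega⟩))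

theorem restLe_glue_right (up down : Bool) (P Q : IntRel) {k : ℕ}
    (hk1 : P.n ≤ k) (hk2 : k ≤ P.n + Q.n) :
    restLe (glue up down P Q) k = glue up down P (restLe Q (k - P.n)) := by
  refine IntRel.ext' (by simp only [glue, restLe]; omega) fun a b => ?_
  simp only [restLe, glue]
  constructor
  · rintro ⟨h1, h2, h | ⟨g1, g2, g3⟩ | ⟨hu, g1, g2, g3⟩ | ⟨hd, g1, g2, g3⟩⟩
    · exact Or.inl h
    · exact Or.inr (Or.inl ⟨g1, g2, by omega, by omega, g3⟩)
    · exact Or.inr (Or.inr (Or.inl ⟨hu, by omega, by omega, by omega⟩))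
    · exact Or.inr (Or.inr (Or.inr ⟨hd, by omega, by omega, by omega⟩))
  · rintro (h | ⟨g1, g2, g3, g4, g5⟩ | ⟨hu, g1, g2, g3⟩ | ⟨hd, g1, g2, g3⟩)
    · have := P.dom a b h; exact ⟨by omega, by omega, Or.inl h⟩
    · exact ⟨by omega, by omega, Or.inr (Or.inl ⟨g1, g2, g5⟩)⟩
    · exact ⟨by omega, by omega, Or.inr (Or.inr (Or.inl ⟨hu, by omega, by omega, by omega⟩))⟩
    · exact ⟨by omega, by omega, Or.inr (Or.inr (Or.inr ⟨hd, by omega, by omega, by omega⟩))⟩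

theorem restGe_glue_right (up down : Bool) (P Q : IntRel) {k : ℕ} (hk : P.n ≤ k) :
    restGe (glue up down P Q) k = restGe Q (k - P.n) := by
  refine IntRel.ext' (by simp only [glue, restGe]; omega) fun a b => ?_
  simp only [restGe, glue]
  rw [show a + k - P.n = a + (k - P.n) by omega, show b + k - P.n = b + (k - P.n) by omega]
  constructor
  · rintro (h | ⟨g1, g2, g3⟩ | ⟨_, g1, g2, g3⟩ | ⟨_, g1, g2, g3⟩)
    · have := P.dom _ _ h; omega
    · exact g3
    · omega
    · omega
  · intro h; exact Or.inr (Or.inl ⟨by omega, by omega, h⟩)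

/-- The coproduct `Δ_R` is coassociative, and for each of the four products
`★ ∈ {⊔, ↑, ↓, ↕}` the unital infinitesimal relation holds:
`Δ_R(P ★ Q) = Σ P₍₁₎ ⊗ (P₍₂₎ ★ Q) + Σ (P ★ Q₍₁₎) ⊗ Q₍₂₎ − P ⊗ Q`. -/
theorem stmt19 :
    (∀ R : IntRel,
      ((coR R).sum fun p a =>
          a • ((coR p.1).sum fun q b => b • Finsupp.single (q.1, q.2, p.2) (1 : ℤ))) =
      ((coR R).sum fun p a =>
          a • ((coR p.2).sum fun q b => b • Finsupp.single (p.1, q.1, q.2) (1 : ℤ)))) ∧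
    (∀ (up down : Bool) (P Q : IntRel),
      coR (glue up down P Q) =
        ((coR P).sum fun p a => a • Finsupp.single (p.1, glue up down p.2 Q) (1 : ℤ)) +
        ((coR Q).sum fun p a => a • Finsupp.single (glue up down P p.1, p.2) (1 : ℤ)) -
        Finsupp.single (P, Q) 1) := by
  constructor
  · -- coassociativity
    intro R
    rw [coR_sum, coR_sum]
    simp only [coR_sum]
    rw [Finset.sum_sigma', Finset.sum_sigma']
    refine Finset.sum_bij' (fun a _ => ⟨a.2, a.1 - a.2⟩) (fun b _ => ⟨b.1 + b.2, b.1⟩)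
      ?_ ?_ ?_ ?_ ?_
    · rintro ⟨i, j⟩ ha
      simp only [Finset.mem_sigma, Finset.mem_range, restLe, restGe] at ha ⊢
      omega
    · rintro ⟨i, j⟩ hb
      simp only [Finset.mem_sigma, Finset.mem_range, restLe, restGe] at hb ⊢
      omega
    · rintro ⟨i, j⟩ ha
      simp only [Finset.mem_sigma, Finset.mem_range, restLe] at ha
      show (⟨j + (i - j), j⟩ : Σ _ : ℕ, ℕ) = ⟨i, j⟩
      rw [show j + (i - j) = i by omega]
    · rintro ⟨i, j⟩ hb
      simp only [Finset.mem_sigma, Finset.mem_range, restGe] at hb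
      show (⟨i, i + j - i⟩ : Σ _ : ℕ, ℕ) = ⟨i, j⟩
      rw [show i + j - i = j by omega]
    · rintro ⟨i, j⟩ ha
      simp only [Finset.mem_sigma, Finset.mem_range, restLe] at ha
      have hji : j ≤ i := by omega
      have hin : i ≤ R.n := by omega
      rw [restLe_restLe R hji, restGe_restLe R i j, restGe_restGe R j (i - j),
        show j + (i - j) = i by omega]
  · -- unital infinitesimal relation
    intro up down P Q
    rw [coR, coR_sum, coR_sum]
    have hB0 : Finsupp.single ((glue up down P (restLe Q 0), restGe Q 0) : IntRel × IntRel)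
        (1 : ℤ) = Finsupp.single (P, Q) 1 := by
      rw [glue_restLe_zero, restGe_zero]
    have hsplit : P.n + Q.n + 1 = (P.n + 1) + Q.n := by omega
    rw [show (glue up down P Q).n = P.n + Q.n from rfl, hsplit, Finset.sum_range_add]
    have h1 : ∀ k ∈ Finset.range (P.n + 1),
        (Finsupp.single ((restLe (glue up down P Q) k, restGe (glue up down P Q) k) :
            IntRel × IntRel) (1 : ℤ)) =
        Finsupp.single ((restLe P k, glue up down (restGe P k) Q) : IntRel × IntRel) 1 := by
      intro k hk
      simp only [Finset.mem_range] at hk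
      rw [restLe_glue_left up down P Q (by omega), restGe_glue_left up down P Q (by omega)]
    have h2 : ∀ j ∈ Finset.range Q.n,
        (Finsupp.single ((restLe (glue up down P Q) (P.n + 1 + j),
            restGe (glue up down P Q) (P.n + 1 + j)) : IntRel × IntRel) (1 : ℤ)) =
        Finsupp.single ((glue up down P (restLe Q (j + 1)), restGe Q (j + 1)) :
            IntRel × IntRel) 1 := by
      intro j hj
      simp only [Finset.mem_range] at hj
      rw [restLe_glue_right up down P Q (by omega) (by omega),
        restGe_glue_right up down P Q (by omega), show P.n + 1 + j - P.n = j + 1 by omega]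
    rw [Finset.sum_congr rfl h1, Finset.sum_congr rfl h2,
      Finset.sum_range_succ' (fun j => Finsupp.single
        ((glue up down P (restLe Q j), restGe Q j) : IntRel × IntRel) (1 : ℤ)) Q.n,
      hB0]
    abel
end
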